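/- Let T be a tournament on n ≥ 4 vertices. Let C3(T) denote the number of 3-element vertex subsets spanning a cyclic triangle and C4(T) the number of 4-element vertex subsets whose induced subtournament contains a directed 4-cycle. Then 2·C4(T) ≤ (n−3)·C3(T). In particular, in density form, c4(T) ≤ 2·c3(T), where c3(T) = C3(T)/C(n,3) and c4(T) = C4(T)/C(n,4). -/
import Mathlib


open Finset

/-- A tournament on `Fin n`: an orientation of the complete graph, i.e. no loops and
for all distinct `x, y` exactly one of `r x y`, `r y x` holds. -/
def IsTournament {n : ℕ} (r : Fin n → Fin n → Prop) : Prop :=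
  (∀ x, ¬ r x x) ∧ ∀ x y : Fin n, x ≠ y → ((r x y ∧ ¬ r y x) ∨ (r y x ∧ ¬ r x y))

/-- `s` spans a cyclic triangle: `s = {x,y,z}` with `x→y→z→x`. -/
def IsCyclicTriple {n : ℕ} (r : Fin n → Fin n → Prop) (s : Finset (Fin n)) : Prop :=
  ∃ x y z : Fin n, x ≠ y ∧ y ≠ z ∧ x ≠ z ∧ s = {x, y, z} ∧ r x y ∧ r y z ∧ r z x

/-- `s` spans a transitive triple. -/
def IsTransTriple {n : ℕ} (r : Fin n → Fin n → Prop) (s : Finset (Fin n)) : Prop :=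
  ∃ x y z : Fin n, x ≠ y ∧ y ≠ z ∧ x ≠ z ∧ s = {x, y, z} ∧ r x y ∧ r y z ∧ r x z

/-- `s` contains a directed 4-cycle through all of its (four) elements. -/
def HasCycle4 {n : ℕ} (r : Fin n → Fin n → Prop) (s : Finset (Fin n)) : Prop :=
  ∃ a b c d : Fin n, a ≠ b ∧ a ≠ c ∧ a ≠ d ∧ b ≠ c ∧ b ≠ d ∧ c ≠ d ∧
    s = {a, b, c, d} ∧ r a b ∧ r b c ∧ r c d ∧ r d a

/-- `s` spans a transitive 4-vertex subtournament. -/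
def IsTrans4 {n : ℕ} (r : Fin n → Fin n → Prop) (s : Finset (Fin n)) : Prop :=
  ∃ a b c d : Fin n, a ≠ b ∧ a ≠ c ∧ a ≠ d ∧ b ≠ c ∧ b ≠ d ∧ c ≠ d ∧
    s = {a, b, c, d} ∧ r a b ∧ r a c ∧ r a d ∧ r b c ∧ r b d ∧ r c d

open Classical in
/-- `C3(T)`: number of 3-element vertex subsets spanning a cyclic triangle. -/
noncomputable def cyc3Count {n : ℕ} (r : Fin n → Fin n → Prop) : ℕ :=
  ((univ.powersetCard 3).filter (fun s => IsCyclicTriple r s)).card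

open Classical in
/-- `T3(T)`: number of 3-element vertex subsets spanning a transitive triple. -/
noncomputable def trans3Count {n : ℕ} (r : Fin n → Fin n → Prop) : ℕ :=
  ((univ.powersetCard 3).filter (fun s => IsTransTriple r s)).card

open Classical in
/-- `C4(T)`: number of 4-element vertex subsets containing a directed 4-cycle. -/
noncomputable def cyc4Count {n : ℕ} (r : Fin n → Fin n → Prop) : ℕ :=
  ((univ.powersetCard 4).filter (fun s => HasCycle4 r s)).card

open Classical in
/-- `T4(T)`: number of 4-element vertex subsets spanning a transitive subtournament. -/
noncomputable def trans4Count {n : ℕ} (r : Fin n → Fin n → Prop) : ℕ :=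
  ((univ.powersetCard 4).filter (fun s => IsTrans4 r s)).card


lemma two_le_card' {α : Type*} {s : Finset α} {a b : α} (hab : a ≠ b)
    (ha : a ∈ s) (hb : b ∈ s) : 2 ≤ s.card :=
  Finset.one_lt_card.2 ⟨a, ha, b, hb, hab⟩

lemma triple_mem {n : ℕ} (r : Fin n → Fin n → Prop) {x y z : Fin n}
    (hxy : x ≠ y) (hyz : y ≠ z) (hxz : x ≠ z) (h1 : r x y) (h2 : r y z) (h3 : r z x) :
    ({x, y, z} : Finset (Fin n)) ∈ univ.powersetCard 3 ∧
      IsCyclicTriple r ({x, y, z} : Finset (Fin n)) := by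
  constructor
  · rw [mem_powersetCard]
    refine ⟨subset_univ _, ?_⟩
    rw [card_insert_of_notMem (by simp [hxy, hxz]),
      card_insert_of_notMem (by simp [hyz]), card_singleton]
  · exact ⟨x, y, z, hxy, hyz, hxz, rfl, h1, h2, h3⟩

lemma count_ineq {n : ℕ} (r : Fin n → Fin n → Prop) (hT : IsTournament r)
    [DecidablePred fun s => IsCyclicTriple r s] [DecidablePred fun s => HasCycle4 r s] :
    2 * ((univ.powersetCard 4).filter (fun s => HasCycle4 r s)).card ≤
      (n - 3) * ((univ.powersetCard 3).filter (fun s => IsCyclicTriple r s)).card := by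
  classical
  obtain ⟨hirr, htot⟩ := hT
  set A := (univ.powersetCard 3).filter (fun s => IsCyclicTriple r s) with hA
  set B := (univ.powersetCard 4).filter (fun s => HasCycle4 r s) with hB
  have step3 : ∀ s ∈ B, 2 ≤ (A.filter (· ⊆ s)).card := by
    intro s hs
    rw [hB, mem_filter] at hs
    obtain ⟨hs4, a, b, c, d, hab, hac, had, hbc, hbd, hcd, hseq, rab, rbc, rcd, rda⟩ := hs
    have mk : ∀ x y z : Fin n, x ≠ y → y ≠ z → x ≠ z → r x y → r y z → r z x →
        x ∈ s → y ∈ s → z ∈ s → ({x, y, z} : Finset (Fin n)) ∈ A.filter (· ⊆ s) := by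
      intro x y z hxy hyz hxz h1 h2 h3 hx hy hz
      rw [mem_filter, hA, mem_filter]
      refine ⟨⟨(triple_mem r hxy hyz hxz h1 h2 h3).1, (triple_mem r hxy hyz hxz h1 h2 h3).2⟩, ?_⟩
      intro u hu
      simp only [mem_insert, mem_singleton] at hu
      rcases hu with rfl | rfl | rfl <;> assumption
    have hma : a ∈ s := by rw [hseq]; simp
    have hmb : b ∈ s := by rw [hseq]; simp
    have hmc : c ∈ s := by rw [hseq]; simp
    have hmd : d ∈ s := by rw [hseq]; simp
    have nemem : ∀ (w x y z : Fin n), w ≠ x → w ≠ y → w ≠ z →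
        w ∉ ({x, y, z} : Finset (Fin n)) := by
      intro w x y z h1 h2 h3; simp [h1, h2, h3]
    rcases htot a c hac with ⟨rac, -⟩ | ⟨rca, -⟩ <;> rcases htot b d hbd with ⟨rbd, -⟩ | ⟨rdb, -⟩
    · refine two_le_card' (a := ({a, c, d} : Finset (Fin n))) (b := {d, a, b}) ?_ ?_ ?_
      · intro h
        exact nemem b a c d hab.symm hbc hbd (by rw [h]; simp)
      · exact mk a c d hac hcd had rac rcd rda hma hmc hmd
      · exact mk d a b had.symm hab hbd.symm rda rab rbd hmd hma hmb
    · refine two_le_card' (a := ({a, c, d} : Finset (Fin n))) (b := {b, c, d}) ?_ ?_ ?_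
      · intro h
        exact nemem a b c d hab hac had (by rw [← h]; simp)
      · exact mk a c d hac hcd had rac rcd rda hma hmc hmd
      · exact mk b c d hbc hcd hbd rbc rcd rdb hmb hmc hmd
    · refine two_le_card' (a := ({a, b, c} : Finset (Fin n))) (b := {d, a, b}) ?_ ?_ ?_
      · intro h
        exact nemem c d a b hcd hac.symm hbc.symm (by rw [← h]; simp)
      · exact mk a b c hab hbc hac rab rbc rca hma hmb hmc
      · exact mk d a b had.symm hab hbd.symm rda rab rbd hmd hma hmb
    · refine two_le_card' (a := ({a, b, c} : Finset (Fin n))) (b := {b, c, d}) ?_ ?_ ?_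
      · intro h
        exact nemem a b c d hab hac had (by rw [← h]; simp)
      · exact mk a b c hab hbc hac rab rbc rca hma hmb hmc
      · exact mk b c d hbc hcd hbd rbc rcd rdb hmb hmc hmd
  have step2 : ∀ t ∈ A, (B.filter (fun s => t ⊆ s)).card ≤ n - 3 := by
    intro t ht
    rw [hA, mem_filter, mem_powersetCard] at ht
    obtain ⟨⟨-, ht3⟩, -⟩ := ht
    have hsub : B.filter (fun s => t ⊆ s) ⊆ (univ \ t).image (fun x => insert x t) := by
      intro s hs
      rw [mem_filter] at hs
      obtain ⟨hsB, hts⟩ := hs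
      rw [hB, mem_filter, mem_powersetCard] at hsB
      obtain ⟨⟨-, hs4⟩, -⟩ := hsB
      have hcard : (s \ t).card = 1 := by
        rw [card_sdiff_of_subset hts, hs4, ht3]
      obtain ⟨x, hx⟩ := card_eq_one.1 hcard
      have hxs : x ∈ s \ t := hx ▸ mem_singleton_self x
      rw [mem_sdiff] at hxs
      rw [mem_image]
      refine ⟨x, mem_sdiff.2 ⟨mem_univ x, hxs.2⟩, ?_⟩
      apply Finset.eq_of_subset_of_card_le
      · exact insert_subset hxs.1 hts
      · rw [hs4, card_insert_of_notMem hxs.2, ht3]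
    calc (B.filter (fun s => t ⊆ s)).card
        ≤ ((univ \ t).image (fun x => insert x t)).card := card_le_card hsub
      _ ≤ (univ \ t).card := card_image_le
      _ = n - 3 := by rw [card_sdiff_of_subset (subset_univ t), card_univ, Fintype.card_fin, ht3]
  have swap : ∑ s ∈ B, (A.filter (· ⊆ s)).card = ∑ t ∈ A, (B.filter (fun s => t ⊆ s)).card := by
    simp only [card_filter]
    exact Finset.sum_comm
  calc 2 * B.card = ∑ _s ∈ B, 2 := by rw [sum_const, smul_eq_mul, mul_comm]
    _ ≤ ∑ s ∈ B, (A.filter (· ⊆ s)).card := sum_le_sum step3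
    _ = ∑ t ∈ A, (B.filter (fun s => t ⊆ s)).card := swap
    _ ≤ ∑ _t ∈ A, (n - 3) := sum_le_sum step2
    _ = (n - 3) * A.card := by rw [sum_const, smul_eq_mul, mul_comm]

/-- `2·C4(T) ≤ (n−3)·C3(T)`, and in density form `c4(T) ≤ 2·c3(T)`. -/
theorem stmt_1 {n : ℕ} (hn : 4 ≤ n) (r : Fin n → Fin n → Prop) (hT : IsTournament r) :
    2 * cyc4Count r ≤ (n - 3) * cyc3Count r ∧
    (cyc4Count r : ℝ) / (n.choose 4 : ℝ) ≤ 2 * ((cyc3Count r : ℝ) / (n.choose 3 : ℝ)) := by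
  have key : 2 * cyc4Count r ≤ (n - 3) * cyc3Count r := by
    unfold cyc4Count cyc3Count
    classical
    exact count_ineq r hT
  refine ⟨key, ?_⟩
  have hc3 : 0 < n.choose 3 := Nat.choose_pos (by omega)
  have hc4 : 0 < n.choose 4 := Nat.choose_pos hn
  have hid : n.choose 4 * 4 = n.choose 3 * (n - 3) := Nat.choose_succ_right_eq n 3
  have hnat : 4 * (cyc4Count r * n.choose 3) ≤ 4 * (2 * cyc3Count r * n.choose 4) := by
    calc 4 * (cyc4Count r * n.choose 3) = 2 * n.choose 3 * (2 * cyc4Count r) := by ring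
      _ ≤ 2 * n.choose 3 * ((n - 3) * cyc3Count r) := Nat.mul_le_mul_left _ key
      _ = 2 * cyc3Count r * (n.choose 3 * (n - 3)) := by ring
      _ = 2 * cyc3Count r * (n.choose 4 * 4) := by rw [hid]
      _ = 4 * (2 * cyc3Count r * n.choose 4) := by ring
  have hnat' : cyc4Count r * n.choose 3 ≤ 2 * cyc3Count r * n.choose 4 :=
    Nat.le_of_mul_le_mul_left hnat (by norm_num)
  rw [← mul_div_assoc, div_le_div_iff₀ (by exact_mod_cast hc4) (by exact_mod_cast hc3)]
  exact_mod_cast hnat'
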